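/- arXiv:cs/0009002 — 3 statements merged into one kernel-verified Lean document; each statement's English description precedes it below -/
import Mathlib

section
/- Let G be a finite group, H a subgroup of G, and h ∈ G. Then ‖(|H⟩ − |Hh⟩)/2‖² = 0 if h ∈ H, and ‖(|H⟩ − |Hh⟩)/2‖² = 1/2 if h ∉ H. (This is the acceptance probability of the final measurement of the verification procedure when the certificate is the uniform superposition |H⟩.) -/
/-- The uniform superposition `|S⟩ = |S|^{-1/2} ∑_{s ∈ S} e_s` over a finite
subset `S` of `G`, as a vector in `EuclideanSpace ℂ G`. -/
noncomputable def uniformSuperposition {G : Type*} [Fintype G] [DecidableEq G]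
    (S : Finset G) : EuclideanSpace ℂ G :=
  WithLp.toLp 2 (fun x => if x ∈ S then (((Real.sqrt S.card)⁻¹ : ℝ) : ℂ) else 0)

/-- For a finite group `G`, a subgroup `H` and `h ∈ G`, the quantity
`‖(|H⟩ − |Hh⟩)/2‖²` equals `0` if `h ∈ H` and `1/2` if `h ∉ H`. -/
theorem norm_sq_half_sub_uniformSuperposition_coset {G : Type*} [Group G] [Fintype G]
    [DecidableEq G] (H : Subgroup G) (h : G) :
    (h ∈ H →
      ‖(2 : ℂ)⁻¹ • (uniformSuperposition ((H : Set G).toFinite.toFinset)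
          - uniformSuperposition (((H : Set G).toFinite.toFinset).image (· * h)))‖ ^ 2
        = 0) ∧
    (h ∉ H →
      ‖(2 : ℂ)⁻¹ • (uniformSuperposition ((H : Set G).toFinite.toFinset)
          - uniformSuperposition (((H : Set G).toFinite.toFinset).image (· * h)))‖ ^ 2
        = 1 / 2) := by
  classical
  set T := (H : Set G).toFinite.toFinset with hT
  have hmemT : ∀ x, x ∈ T ↔ x ∈ H := by
    intro x; rw [hT, Set.Finite.mem_toFinset, SetLike.mem_coe]
  constructor
  · intro hh
    have himg : T.image (· * h) = T := by
      ext x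
      simp only [Finset.mem_image, hmemT]
      constructor
      · rintro ⟨t, ht, rfl⟩; exact H.mul_mem ht hh
      · intro hx; exact ⟨x * h⁻¹, H.mul_mem hx (H.inv_mem hh), by group⟩
    simp [himg]
  · intro hh
    have hdisj : ∀ x, x ∈ T → x ∉ T.image (· * h) := by
      intro x hx hmem
      obtain ⟨t, ht, rfl⟩ := Finset.mem_image.mp hmem
      have h1 : t * h ∈ H := (hmemT _).mp hx
      have h2 : t ∈ H := (hmemT t).mp ht
      exact hh (by simpa using H.mul_mem (H.inv_mem h2) h1)
    set n := T.card with hn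
    have hnpos : 0 < n := Finset.card_pos.mpr ⟨1, (hmemT 1).mpr H.one_mem⟩
    have hcard : (T.image (· * h)).card = n := by
      rw [Finset.card_image_of_injective _ (mul_left_injective h)]
    set c : ℝ := (Real.sqrt n)⁻¹ with hc
    have hc0 : 0 ≤ c := by positivity
    have hc2 : c ^ 2 = (n : ℝ)⁻¹ := by
      rw [hc, inv_pow, Real.sq_sqrt (by positivity)]
    set v := uniformSuperposition T - uniformSuperposition (T.image (· * h)) with hv
    have hvx : ∀ x, v x = (if x ∈ T then (c : ℂ) else 0)
        - (if x ∈ T.image (· * h) then (c : ℂ) else 0) := by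
      intro x
      show uniformSuperposition T x - uniformSuperposition (T.image (· * h)) x = _
      rw [uniformSuperposition, uniformSuperposition, hcard]
    have hvnorm : ∀ x, ‖v x‖ ^ 2 =
        (if x ∈ T then c ^ 2 else 0) + (if x ∈ T.image (· * h) then c ^ 2 else 0) := by
      intro x
      rw [hvx x]
      by_cases hx : x ∈ T
      · rw [if_pos hx, if_neg (hdisj x hx), if_pos hx, if_neg (hdisj x hx), sub_zero, add_zero,
          Complex.norm_real, Real.norm_eq_abs, abs_of_nonneg hc0]
      · by_cases hx' : x ∈ T.image (· * h)
        · rw [if_neg hx, if_pos hx', if_neg hx, if_pos hx', zero_sub, norm_neg, zero_add,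
            Complex.norm_real, Real.norm_eq_abs, abs_of_nonneg hc0]
        · rw [if_neg hx, if_neg hx', if_neg hx, if_neg hx']
          simp
    have hn0 : (n : ℝ) ≠ 0 := by exact_mod_cast hnpos.ne'
    have hvsq : ‖v‖ ^ 2 = 2 := by
      rw [EuclideanSpace.norm_eq, Real.sq_sqrt (by positivity)]
      rw [Finset.sum_congr rfl (fun x _ => hvnorm x), Finset.sum_add_distrib]
      rw [Finset.sum_ite_mem, Finset.sum_ite_mem, Finset.univ_inter, Finset.univ_inter,
        Finset.sum_const, Finset.sum_const, hcard, ← hn, hc2, nsmul_eq_mul,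
        mul_inv_cancel₀ hn0]
      norm_num
    rw [norm_smul]
    have h2 : ‖(2:ℂ)⁻¹‖ = 2⁻¹ := by simp
    rw [h2, mul_pow, hvsq]
    norm_num
end

section
/- Let G be a finite group, H a subgroup of G, h ∈ H, ε ≥ 0 a real number, α : H → ℂ a function with | |α_g|² − 1/|H| | ≤ ε for all g ∈ H, and β : G → ℂ with ∑_{x∈G} |β_x|² ≤ 1. Then (1/4)·‖ ∑_{x∈G} ∑_{g∈H} (|α_g|² − |α_{gh⁻¹}|²)·β_x · e_{xg} ‖² ≤ |H|²·ε², where the vector lives in EuclideanSpace ℂ G and (e_y)_{y∈G} is the standard orthonormal basis. (This is the bound on the acceptance probability of the verification procedure on an arbitrary certificate in the case h ∈ H.) -/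
lemma key_norm {G : Type*} [Group G] [Fintype G] [DecidableEq G] (z : G → ℂ) (g : G) :
    ‖∑ x : G, z x • EuclideanSpace.single (x * g) (1 : ℂ)‖ ^ 2
      = ∑ x : G, ‖z x‖ ^ 2 := by
  have hv : (∑ x : G, z x • EuclideanSpace.single (x * g) (1 : ℂ))
      = WithLp.toLp 2 (fun y => z (y * g⁻¹)) := by
    ext y
    rw [WithLp.ofLp_sum, Finset.sum_apply]
    simp only [PiLp.smul_apply, EuclideanSpace.single_apply, smul_eq_mul, mul_ite, mul_one,
      mul_zero]
    rw [Finset.sum_eq_single (y * g⁻¹)]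
    · simp
    · intro b _ hb
      rw [if_neg]
      intro hy
      apply hb
      simp [hy]
    · simp
  rw [hv, EuclideanSpace.norm_eq, Real.sq_sqrt (by positivity)]
  exact Fintype.sum_equiv (Equiv.mulRight g⁻¹) _ _ (fun y => by simp)

/-- Let `G` be a finite group, `H` a subgroup, `h ∈ H`, `ε ≥ 0`,
`α : H → ℂ` with `| |α g|² − 1/|H| | ≤ ε` for all `g ∈ H`, and `β : G → ℂ`
with `∑_x |β x|² ≤ 1`.  Then
`(1/4)‖ ∑_{x ∈ G} ∑_{g ∈ H} (|α g|² − |α (g h⁻¹)|²) β x · e_{xg} ‖² ≤ |H|² ε²`. -/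
theorem acceptance_prob_bound {G : Type*} [Group G] [Fintype G] [DecidableEq G]
    (H : Subgroup G) [DecidablePred (· ∈ H)] (h : H) (ε : ℝ) (hε : 0 ≤ ε)
    (α : H → ℂ)
    (hα : ∀ g : H, |‖α g‖ ^ 2 - 1 / (Fintype.card H : ℝ)| ≤ ε)
    (β : G → ℂ) (hβ : ∑ x : G, ‖β x‖ ^ 2 ≤ 1) :
    (1 / 4 : ℝ) *
      ‖∑ x : G, ∑ g : H,
        (((‖α g‖ ^ 2 - ‖α (g * h⁻¹)‖ ^ 2 : ℝ) : ℂ) * β x) •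
          EuclideanSpace.single (x * (g : G)) (1 : ℂ)‖ ^ 2
      ≤ (Fintype.card H : ℝ) ^ 2 * ε ^ 2 := by
  set c : H → ℝ := fun g => ‖α g‖ ^ 2 - ‖α (g * h⁻¹)‖ ^ 2 with hc
  have hc2 : ∀ g : H, |c g| ≤ 2 * ε := by
    intro g
    have h1 := hα g
    have h2 := hα (g * h⁻¹)
    have := abs_sub_le (‖α g‖ ^ 2) (1 / (Fintype.card H : ℝ))
      (‖α (g * h⁻¹)‖ ^ 2)
    rw [abs_sub_comm (1 / (Fintype.card H : ℝ))] at this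
    simp only [hc]
    linarith
  set v := ∑ x : G, ∑ g : H,
      ((c g : ℂ) * β x) • EuclideanSpace.single (x * (g : G)) (1 : ℂ) with hv
  have hn : ‖v‖ ≤ (Fintype.card H : ℝ) * (2 * ε) := by
    rw [hv, Finset.sum_comm]
    calc ‖∑ g : H, ∑ x : G, ((c g : ℂ) * β x) • EuclideanSpace.single (x * (g : G)) (1 : ℂ)‖
        ≤ ∑ g : H, ‖∑ x : G, ((c g : ℂ) * β x) • EuclideanSpace.single (x * (g : G)) (1 : ℂ)‖ :=
          norm_sum_le _ _
      _ ≤ ∑ _g : H, 2 * ε := by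
          apply Finset.sum_le_sum
          intro g _
          have hk := key_norm (fun x => (c g : ℂ) * β x) (g : G)
          have hs : ∑ x : G, ‖(c g : ℂ) * β x‖ ^ 2
              = (c g) ^ 2 * ∑ x : G, ‖β x‖ ^ 2 := by
            simp [map_mul, mul_pow, ← Finset.mul_sum, Complex.norm_real, sq_abs]
          rw [hs] at hk
          have hb : (c g) ^ 2 * ∑ x : G, ‖β x‖ ^ 2 ≤ (2 * ε) ^ 2 := by
            have h1 : (c g) ^ 2 ≤ (2 * ε) ^ 2 := by
              have := hc2 g
              nlinarith [abs_nonneg (c g), sq_abs (c g)]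
            have h0 : (0:ℝ) ≤ ∑ x : G, ‖β x‖ ^ 2 := by positivity
            nlinarith
          nlinarith [norm_nonneg (∑ x : G,
            ((c g : ℂ) * β x) • EuclideanSpace.single (x * (g : G)) (1 : ℂ))]
      _ = (Fintype.card H : ℝ) * (2 * ε) := by simp [mul_comm]
  have h0 : (0:ℝ) ≤ ‖v‖ := norm_nonneg v
  have h1 : (0:ℝ) ≤ (Fintype.card H : ℝ) := by positivity
  nlinarith
end

section
/- Let G be a finite group with |G| ≤ 2^n and H a subgroup of G, h ∈ H, and α : H → ℂ with | |α_g|² − 1/|H| | ≤ 2^{-2n} for all g ∈ H, and β : G → ℂ with ∑_{x∈G} |β_x|² ≤ 1. Then (1/4)·‖ ∑_{x∈G} ∑_{g∈H} (|α_g|² − |α_{gh⁻¹}|²)·β_x · e_{xg} ‖² ≤ 2^{-2n}. (Hence the verification procedure for Group Non-Membership accepts any certificate with exponentially small probability when h actually belongs to H.) -/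
/-- Let `G` be a finite group with `|G| ≤ 2^n`, `H` a subgroup, `h ∈ H`,
`α : H → ℂ` with `| |α g|² − 1/|H| | ≤ 2^{-2n}` for all `g ∈ H`, and `β : G → ℂ`
with `∑_x |β x|² ≤ 1`.  Then
`(1/4)‖ ∑_{x ∈ G} ∑_{g ∈ H} (|α g|² − |α (g h⁻¹)|²) β x · e_{xg} ‖² ≤ 2^{-2n}`. -/
theorem acceptance_prob_exp_small {G : Type*} [Group G] [Fintype G] [DecidableEq G]
    (n : ℕ) (hG : Fintype.card G ≤ 2 ^ n)
    (H : Subgroup G) [DecidablePred (· ∈ H)] (h : H)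
    (α : H → ℂ)
    (hα : ∀ g : H, |‖α g‖ ^ 2 - 1 / (Fintype.card H : ℝ)|
      ≤ (2 : ℝ) ^ (-(2 * n : ℤ)))
    (β : G → ℂ) (hβ : ∑ x : G, ‖β x‖ ^ 2 ≤ 1) :
    (1 / 4 : ℝ) *
      ‖∑ x : G, ∑ g : H,
        (((‖α g‖ ^ 2 - ‖α (g * h⁻¹)‖ ^ 2 : ℝ) : ℂ) * β x) •
          EuclideanSpace.single (x * (g : G)) (1 : ℂ)‖ ^ 2
      ≤ (2 : ℝ) ^ (-(2 * n : ℤ)) := by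
  set δ : ℝ := (2 : ℝ) ^ (-(2 * n : ℤ)) with hδ
  have hδpos : 0 < δ := by positivity
  -- coefficient bound
  have hc : ∀ g : H, |‖α g‖ ^ 2 - ‖α (g * h⁻¹)‖ ^ 2| ≤ 2 * δ := by
    intro g
    have := hα g
    have := hα (g * h⁻¹)
    calc |‖α g‖ ^ 2 - ‖α (g * h⁻¹)‖ ^ 2|
        = |(‖α g‖ ^ 2 - 1 / (Fintype.card H : ℝ)) -
            (‖α (g * h⁻¹)‖ ^ 2 - 1 / (Fintype.card H : ℝ))| := by ring_nf
      _ ≤ |‖α g‖ ^ 2 - 1 / (Fintype.card H : ℝ)| +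
            |‖α (g * h⁻¹)‖ ^ 2 - 1 / (Fintype.card H : ℝ)| := abs_sub _ _
      _ ≤ δ + δ := add_le_add (hα g) (hα (g * h⁻¹))
      _ = 2 * δ := by ring
  -- inner vector norm bound
  have hu : ∀ g : H, ‖∑ x : G, β x • EuclideanSpace.single (x * (g : G)) (1 : ℂ)‖ ≤ 1 := by
    intro g
    set b : EuclideanSpace ℂ G := WithLp.toLp 2 (fun x => β x) with hb
    set w : EuclideanSpace ℂ G := WithLp.toLp 2 (fun y => β (y * (g : G)⁻¹)) with hw
    have heq : (∑ x : G, β x • EuclideanSpace.single (x * (g : G)) (1 : ℂ)) = w := by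
      ext y
      rw [WithLp.ofLp_sum, Finset.sum_apply]
      have : ∀ x : G, (β x • EuclideanSpace.single (x * (g : G)) (1 : ℂ)) y
          = if x = y * (g : G)⁻¹ then β x else 0 := by
        intro x
        simp [EuclideanSpace.single_apply, eq_comm, mul_inv_eq_iff_eq_mul, eq_mul_inv_iff_mul_eq]
      rw [Finset.sum_congr rfl (fun x _ => this x), Finset.sum_ite_eq' Finset.univ]
      simp [hw]
    rw [heq]
    have h1 : ‖w‖ = ‖b‖ := by
      rw [EuclideanSpace.norm_eq w, EuclideanSpace.norm_eq b]
      congr 1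
      exact Fintype.sum_equiv (Equiv.mulRight (g : G)⁻¹) _ _ (fun y => rfl)
    rw [h1]
    have h2 : ‖b‖ ^ 2 ≤ 1 := by
      rw [EuclideanSpace.norm_eq b, Real.sq_sqrt (by positivity)]
      simpa [hb] using hβ
    nlinarith [norm_nonneg b]
  rw [Finset.sum_comm]
  set S := ∑ g : H, ∑ x : G,
      (((‖α g‖ ^ 2 - ‖α (g * h⁻¹)‖ ^ 2 : ℝ) : ℂ) * β x) •
        EuclideanSpace.single (x * (g : G)) (1 : ℂ) with hS
  have key : ‖S‖ ≤ 2 * δ * (2 : ℝ) ^ n := by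
    have step1 : ‖S‖ ≤ ∑ g : H, (2 * δ) := by
      refine (norm_sum_le _ _).trans (Finset.sum_le_sum fun g _ => ?_)
      have : (∑ x : G,
          (((‖α g‖ ^ 2 - ‖α (g * h⁻¹)‖ ^ 2 : ℝ) : ℂ) * β x) •
            EuclideanSpace.single (x * (g : G)) (1 : ℂ))
          = ((‖α g‖ ^ 2 - ‖α (g * h⁻¹)‖ ^ 2 : ℝ) : ℂ) •
            ∑ x : G, β x • EuclideanSpace.single (x * (g : G)) (1 : ℂ) := by
        rw [Finset.smul_sum]
        exact Finset.sum_congr rfl fun x _ => mul_smul _ _ _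
      rw [this, norm_smul]
      have h1 : ‖((‖α g‖ ^ 2 - ‖α (g * h⁻¹)‖ ^ 2 : ℝ) : ℂ)‖
          = |‖α g‖ ^ 2 - ‖α (g * h⁻¹)‖ ^ 2| := by
        rw [Complex.norm_real, Real.norm_eq_abs]
      rw [h1]
      calc _ ≤ (2 * δ) * 1 := mul_le_mul (hc g) (hu g) (norm_nonneg _)
              (by positivity)
        _ = 2 * δ := mul_one _
    have hcard : (Fintype.card H : ℝ) ≤ (2 : ℝ) ^ n := by
      have h1 : Fintype.card H ≤ Fintype.card G :=
        Fintype.card_le_of_injective Subtype.val Subtype.val_injective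
      exact_mod_cast h1.trans hG
    calc ‖S‖ ≤ ∑ g : H, (2 * δ) := step1
      _ = (Fintype.card H : ℝ) * (2 * δ) := by
          rw [Finset.sum_const, Finset.card_univ, nsmul_eq_mul]
      _ ≤ (2 : ℝ) ^ n * (2 * δ) := by
          exact mul_le_mul_of_nonneg_right hcard (by positivity)
      _ = 2 * δ * (2 : ℝ) ^ n := by ring
  have hab : δ * ((2 : ℝ) ^ n) ^ 2 = 1 := by
    rw [hδ, ← pow_mul, ← zpow_natCast (2 : ℝ) (n * 2), ← zpow_add₀ (two_ne_zero)]
    have : (-(2 * n : ℤ) + (n * 2 : ℕ) : ℤ) = 0 := by push_cast; ring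
    rw [this, zpow_zero]
  nlinarith [key, norm_nonneg S, hδpos, hab, sq_nonneg ((2:ℝ)^n)]
end
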